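/- Every generalized hyperbolic operator T on a Banach space X has the positive periodic shadowing property: for every ε > 0 there exists δ > 0 such that every periodic δ-pseudotrajectory of T is ε-shadowed by the trajectory of a periodic point of T. -/

import Mathlib

open Filter Topology

private lemma tsum_norm_bound' {E : Type*} [NormedAddCommGroup E] [NormedSpace ℂ E]
    [CompleteSpace E] {f : ℕ → E} {D r : ℝ} (hr0 : 0 ≤ r) (hr1 : r < 1)
    (hf : ∀ j, ‖f j‖ ≤ D * r ^ j) :
    Summable f ∧ ‖∑' j, f j‖ ≤ D * (1 - r)⁻¹ := by
  have hg : Summable (fun j : ℕ => D * r ^ j) :=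
    (summable_geometric_of_lt_one hr0 hr1).mul_left D
  have hnorm : Summable (fun j => ‖f j‖) :=
    Summable.of_nonneg_of_le (fun _ => norm_nonneg _) hf hg
  have hs : Summable f := hnorm.of_norm
  refine ⟨hs, ?_⟩
  calc ‖∑' j, f j‖ ≤ ∑' j, ‖f j‖ := norm_tsum_le_tsum_norm hnorm
    _ ≤ ∑' j : ℕ, D * r ^ j := Summable.tsum_le_tsum hf hnorm hg
    _ = D * (1 - r)⁻¹ := by rw [tsum_mul_left, tsum_geometric_of_lt_one hr0 hr1]

private lemma geom_of_sr_lt_one' {E : Type*} [NormedAddCommGroup E] [NormedSpace ℂ E]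
    [CompleteSpace E] (a : E →L[ℂ] E) (h : spectralRadius ℂ a < 1) :
    ∃ C r : ℝ, 0 < C ∧ 0 ≤ r ∧ r < 1 ∧ ∀ n, ‖a ^ n‖ ≤ C * r ^ n := by
  obtain ⟨c, hc1, hc2⟩ := exists_between h
  have hc0 : c ≠ 0 := (zero_le |>.trans_lt hc1).ne'
  have hctop : c ≠ ⊤ := (hc2.trans ENNReal.one_lt_top).ne
  have hev : ∀ᶠ n : ℕ in atTop,
      ((‖a ^ n‖₊ : ENNReal) ^ (1 / (n : ℝ)) < c ∧ 1 ≤ n) :=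
    ((spectrum.pow_nnnorm_pow_one_div_tendsto_nhds_spectralRadius a).eventually_lt_const
      hc1).and (eventually_ge_atTop 1)
  obtain ⟨n₀, hn₀⟩ := eventually_atTop.mp hev
  set rn : NNReal := c.toNNReal with hrn
  set r : ℝ := (rn : ℝ) with hr
  have hr0 : 0 < r := by
    have : 0 < rn := ENNReal.toNNReal_pos hc0 hctop
    exact_mod_cast this
  have hr1 : r < 1 := by
    have : (rn : ENNReal) < 1 := by rwa [hrn, ENNReal.coe_toNNReal hctop]
    exact_mod_cast ENNReal.coe_lt_one_iff.mp this
  have key : ∀ n, n₀ ≤ n → ‖a ^ n‖ ≤ r ^ n := by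
    intro n hn
    obtain ⟨hlt, hn1⟩ := hn₀ n hn
    have hne : (1 / (n : ℝ)) * (n : ℝ) = 1 := by
      field_simp
    have h1 : ((‖a ^ n‖₊ : ENNReal) ^ (1 / (n : ℝ))) ^ (n : ℝ) ≤ c ^ (n : ℝ) :=
      ENNReal.rpow_le_rpow hlt.le (by positivity)
    rw [← ENNReal.rpow_mul, hne, ENNReal.rpow_one] at h1
    have h2 : (‖a ^ n‖₊ : ENNReal) ≤ (rn : ENNReal) ^ n := by
      rw [hrn, ENNReal.coe_toNNReal hctop]
      rwa [← ENNReal.rpow_natCast] 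
    rw [← ENNReal.coe_pow, ENNReal.coe_le_coe] at h2
    calc ‖a ^ n‖ = ((‖a ^ n‖₊ : ℝ)) := (coe_nnnorm _).symm
      _ ≤ ((rn ^ n : NNReal) : ℝ) := by exact_mod_cast h2
      _ = r ^ n := by push_cast; rfl
  refine ⟨1 + ∑ k ∈ Finset.range n₀, ‖a ^ k‖ / r ^ k, r, ?_, hr0.le, hr1, ?_⟩
  · have : (0:ℝ) ≤ ∑ k ∈ Finset.range n₀, ‖a ^ k‖ / r ^ k :=
      Finset.sum_nonneg fun k _ => by positivity
    linarith
  · intro n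
    rcases lt_or_ge n n₀ with hlt | hge
    · have h1 : ‖a ^ n‖ / r ^ n ≤ ∑ k ∈ Finset.range n₀, ‖a ^ k‖ / r ^ k :=
        Finset.single_le_sum (f := fun k => ‖a ^ k‖ / r ^ k)
          (fun k _ => by positivity) (Finset.mem_range.mpr hlt)
      have h2 : ‖a ^ n‖ = (‖a ^ n‖ / r ^ n) * r ^ n := by
        field_simp
      rw [h2]
      have hrn0 : (0:ℝ) ≤ r ^ n := by positivity
      nlinarith [mul_le_mul_of_nonneg_right h1 hrn0]
    · have h1 := key n hge
      have h2 : (0:ℝ) ≤ ∑ k ∈ Finset.range n₀, ‖a ^ k‖ / r ^ k :=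
        Finset.sum_nonneg fun k _ => by positivity
      nlinarith [pow_nonneg hr0.le n]

set_option maxHeartbeats 2000000 in
/-- Every generalized hyperbolic operator on a Banach space has the positive periodic
shadowing property. -/
theorem stmt10 {X : Type*} [NormedAddCommGroup X] [NormedSpace ℂ X] [CompleteSpace X]
    (T : X →L[ℂ] X) (M N : Submodule ℂ X)
    (hMc : IsClosed (M : Set X)) (hNc : IsClosed (N : Set X)) (hcompl : IsCompl M N)
    (hTM : ∀ x ∈ M, T x ∈ M)
    (TM : M →L[ℂ] M) (hTMdef : ∀ x : M, (TM x : X) = T x)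
    (hrM : spectralRadius ℂ TM < 1)
    (hinjN : Set.InjOn ⇑T (N : Set X)) (hclosedTN : IsClosed (⇑T '' (N : Set X)))
    (hNsub : (N : Set X) ⊆ ⇑T '' (N : Set X))
    (S : N →L[ℂ] N) (hSdef : ∀ z : N, T ((S z : X)) = (z : X))
    (hrS : spectralRadius ℂ S < 1) :
    ∀ ε > (0 : ℝ), ∃ δ > (0 : ℝ), ∀ (x : ℕ → X) (q : ℕ), 0 < q →
      (∀ n, ‖T (x n) - x (n + 1)‖ ≤ δ) → (∀ n, x (n + q) = x n) →
      ∃ y : X, (⇑T)^[q] y = y ∧ ∀ n, ‖x n - (⇑T)^[n] y‖ < ε := by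
  haveI : CompleteSpace M := hMc.completeSpace_coe
  haveI : CompleteSpace N := hNc.completeSpace_coe
  obtain ⟨C₁, r₁, hC₁, hr₁0, hr₁1, hb₁⟩ := geom_of_sr_lt_one' TM hrM
  obtain ⟨C₂, r₂, hC₂, hr₂0, hr₂1, hb₂⟩ := geom_of_sr_lt_one' S hrS
  set PM : X →L[ℂ] M := M.linearProjOfClosedCompl N hcompl hMc hNc with hPM
  set PN : X →L[ℂ] N := N.linearProjOfClosedCompl M hcompl.symm hNc hMc with hPNdef
  have hPMN : ∀ w : X, (PM w : X) + (PN w : X) = w := by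
    intro w
    have := Submodule.projection_add_projection_eq_self hcompl w
    exact this
  set Ku : ℝ := C₁ * ‖PM‖ * (1 - r₁)⁻¹ with hKu
  set Kv : ℝ := C₂ * ‖PN‖ * (1 - r₂)⁻¹ with hKv
  have h1r₁ : (0:ℝ) < (1 - r₁)⁻¹ := inv_pos.mpr (by linarith)
  have h1r₂ : (0:ℝ) < (1 - r₂)⁻¹ := inv_pos.mpr (by linarith)
  have hKu0 : 0 ≤ Ku := by positivity
  have hKv0 : 0 ≤ Kv := by positivity
  set K : ℝ := Ku + Kv with hK
  intro ε hε
  set δ : ℝ := ε / (2 * (K + 1)) with hδdef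
  have hδpos : 0 < δ := by
    have : (0:ℝ) < K + 1 := by linarith
    positivity
  refine ⟨δ, hδpos, ?_⟩
  intro x q hq hxδ hxper
  set e : ℕ → X := fun n => T (x n) - x (n + 1) with he
  have heper : ∀ n, e (n + q) = e n := by
    intro n
    have h1 : x (n + q) = x n := hxper n
    have h2 : x (n + q + 1) = x (n + 1) := by
      rw [show n + q + 1 = (n + 1) + q by ring]; exact hxper (n + 1)
    simp only [he, h1, h2]
  set a : ℕ → M := fun n => PM (e n) with ha
  set b : ℕ → N := fun n => PN (e n) with hb
  have haper : ∀ n, a (n + q) = a n := fun n => by simp only [ha, heper n]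
  have hbper : ∀ n, b (n + q) = b n := fun n => by simp only [hb, heper n]
  have hae : ∀ n, ‖a n‖ ≤ ‖PM‖ * δ := fun n =>
    (PM.le_opNorm _).trans (mul_le_mul_of_nonneg_left (hxδ n) (norm_nonneg PM))
  have hbe : ∀ n, ‖b n‖ ≤ ‖PN‖ * δ := fun n =>
    (PN.le_opNorm _).trans (mul_le_mul_of_nonneg_left (hxδ n) (norm_nonneg PN))
  -- the stable part
  have hsu : ∀ m : ℕ → ℕ, Summable (fun j => (TM ^ j) (a (m j))) ∧
      ‖∑' j, (TM ^ j) (a (m j))‖ ≤ Ku * δ := by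
    intro m
    have hbd : ∀ j, ‖(TM ^ j) (a (m j))‖ ≤ (C₁ * (‖PM‖ * δ)) * r₁ ^ j := by
      intro j
      calc ‖(TM ^ j) (a (m j))‖ ≤ ‖TM ^ j‖ * ‖a (m j)‖ := (TM ^ j).le_opNorm _
        _ ≤ (C₁ * r₁ ^ j) * (‖PM‖ * δ) := by
            apply mul_le_mul (hb₁ j) (hae _) (norm_nonneg _)
            positivity
        _ = (C₁ * (‖PM‖ * δ)) * r₁ ^ j := by ring
    obtain ⟨h1, h2⟩ := tsum_norm_bound' hr₁0 hr₁1 hbd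
    exact ⟨h1, h2.trans (le_of_eq (by rw [hKu]; ring))⟩
  have hsv : ∀ m : ℕ → ℕ, Summable (fun j => (S ^ (j + 1)) (b (m j))) ∧
      ‖∑' j, (S ^ (j + 1)) (b (m j))‖ ≤ Kv * δ := by
    intro m
    have hbd : ∀ j, ‖(S ^ (j + 1)) (b (m j))‖ ≤ (C₂ * (‖PN‖ * δ)) * r₂ ^ j := by
      intro j
      have hpow : r₂ ^ (j + 1) ≤ r₂ ^ j := pow_le_pow_of_le_one hr₂0 hr₂1.le (Nat.le_succ j)
      calc ‖(S ^ (j + 1)) (b (m j))‖ ≤ ‖S ^ (j + 1)‖ * ‖b (m j)‖ := (S ^ (j + 1)).le_opNorm _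
        _ ≤ (C₂ * r₂ ^ (j + 1)) * (‖PN‖ * δ) := by
            apply mul_le_mul (hb₂ (j + 1)) (hbe _) (norm_nonneg _)
            positivity
        _ ≤ (C₂ * r₂ ^ j) * (‖PN‖ * δ) := by gcongr
        _ = (C₂ * (‖PN‖ * δ)) * r₂ ^ j := by ring
    obtain ⟨h1, h2⟩ := tsum_norm_bound' hr₂0 hr₂1 hbd
    exact ⟨h1, h2.trans (le_of_eq (by rw [hKv]; ring))⟩
  set u : ℕ → M := fun n => -∑' j, (TM ^ j) (a (n + (q - 1) * (j + 1))) with hu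
  set v : ℕ → N := fun n => ∑' j, (S ^ (j + 1)) (b (n + j)) with hv
  have hubound : ∀ n, ‖u n‖ ≤ Ku * δ := by
    intro n
    rw [hu]
    simpa using (hsu (fun j => n + (q - 1) * (j + 1))).2
  have hvbound : ∀ n, ‖v n‖ ≤ Kv * δ := by
    intro n
    exact (hsv (fun j => n + j)).2
  -- recursion for u : u (n+1) = TM (u n) - a n
  have hurec : ∀ n, u (n + 1) = TM (u n) - a n := by
    intro n
    have hsum := (hsu (fun j => (n + 1) + (q - 1) * (j + 1))).1
    have hsplit := Summable.tsum_eq_zero_add hsum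
    have hidx0 : (n + 1) + (q - 1) * (0 + 1) = n + q := by omega
    have hidx : ∀ j : ℕ, (n + 1) + (q - 1) * ((j + 1) + 1) = (n + (q - 1) * (j + 1)) + q := by
      intro j; rw [Nat.mul_succ]; omega
    have hterm : ∀ j : ℕ, (TM ^ (j + 1)) (a ((n + 1) + (q - 1) * ((j + 1) + 1)))
        = TM ((TM ^ j) (a (n + (q - 1) * (j + 1)))) := by
      intro j
      rw [hidx j, haper, pow_succ', ContinuousLinearMap.mul_apply]
    rw [hu]
    simp only []
    rw [hsplit, hidx0, haper n]
    have : ∑' j, (TM ^ (j + 1)) (a ((n + 1) + (q - 1) * ((j + 1) + 1)))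
        = TM (∑' j, (TM ^ j) (a (n + (q - 1) * (j + 1)))) := by
      rw [ContinuousLinearMap.map_tsum TM (hsu (fun j => n + (q - 1) * (j + 1))).1]
      exact tsum_congr hterm
    rw [pow_zero, ContinuousLinearMap.one_apply, this, map_neg, neg_add]
    abel
  -- recursion for v : v n = S (b n) + S (v (n+1))
  have hvrec : ∀ n, v n = S (b n + v (n + 1)) := by
    intro n
    have hsum := (hsv (fun j => n + j)).1
    have hsplit := Summable.tsum_eq_zero_add hsum
    have hterm : ∀ j : ℕ, (S ^ ((j + 1) + 1)) (b (n + (j + 1)))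
        = S ((S ^ (j + 1)) (b ((n + 1) + j))) := by
      intro j
      rw [show n + (j + 1) = (n + 1) + j by ring, pow_succ', ContinuousLinearMap.mul_apply]
    have htail : ∑' j, (S ^ ((j + 1) + 1)) (b (n + (j + 1)))
        = S (∑' j, (S ^ (j + 1)) (b ((n + 1) + j))) := by
      rw [ContinuousLinearMap.map_tsum S (hsv (fun j => (n + 1) + j)).1]
      exact tsum_congr hterm
    rw [hv]
    simp only []
    rw [hsplit, htail, pow_one, map_add]
    simp
  -- periodicity
  have huper : ∀ n, u (n + q) = u n := by
    intro n
    rw [hu]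
    simp only []
    congr 1
    apply tsum_congr
    intro j
    rw [show (n + q) + (q - 1) * (j + 1) = (n + (q - 1) * (j + 1)) + q by omega, haper]
  have hvper : ∀ n, v (n + q) = v n := by
    intro n
    rw [hv]
    simp only []
    apply tsum_congr
    intro j
    rw [show (n + q) + j = (n + j) + q by ring, hbper]
  set z : ℕ → X := fun n => (u n : X) + (v n : X) with hz
  have hzbound : ∀ n, ‖z n‖ ≤ K * δ := by
    intro n
    calc ‖z n‖ ≤ ‖(u n : X)‖ + ‖(v n : X)‖ := norm_add_le _ _
      _ ≤ Ku * δ + Kv * δ := add_le_add (hubound n) (hvbound n)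
      _ = K * δ := by rw [hK]; ring
  have hzper : ∀ n, z (n + q) = z n := by
    intro n; rw [hz]; simp only [huper n, hvper n]
  have hzrec : ∀ n, T (z n) = z (n + 1) + e n := by
    intro n
    have hTu : T ((u n : X)) = (u (n + 1) : X) + (a n : X) := by
      rw [← hTMdef (u n)]
      have : TM (u n) = u (n + 1) + a n := by rw [hurec n]; abel
      rw [this]; push_cast; ring
    have hTv : T ((v n : X)) = (b n : X) + (v (n + 1) : X) := by
      rw [hvrec n, hSdef (b n + v (n + 1))]; push_cast; ring
    have hab : (a n : X) + (b n : X) = e n := hPMN (e n)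
    calc T (z n) = T ((u n : X)) + T ((v n : X)) := by rw [hz]; simp only []; rw [map_add]
      _ = ((u (n + 1) : X) + (v (n + 1) : X)) + ((a n : X) + (b n : X)) := by
          rw [hTu, hTv]; abel
      _ = z (n + 1) + e n := by rw [hab, hz]
  refine ⟨x 0 - z 0, ?_, ?_⟩
  · -- first prove trajectory formula
    have htraj : ∀ n, (⇑T)^[n] (x 0 - z 0) = x n - z n := by
      intro n
      induction n with
      | zero => simp
      | succ k ih =>
        rw [Function.iterate_succ_apply', ih, map_sub, hzrec k]
        simp only [he]
        abel
    rw [htraj q, show x q = x 0 by simpa using hxper 0,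
      show z q = z 0 by simpa using hzper 0]
  · have htraj : ∀ n, (⇑T)^[n] (x 0 - z 0) = x n - z n := by
      intro n
      induction n with
      | zero => simp
      | succ k ih =>
        rw [Function.iterate_succ_apply', ih, map_sub, hzrec k]
        simp only [he]
        abel
    intro n
    rw [htraj n, sub_sub_cancel]
    calc ‖z n‖ ≤ K * δ := hzbound n
      _ ≤ (K + 1) * δ := by nlinarith
      _ = ε / 2 := by rw [hδdef]; field_simp; exact div_self (by linarith : (0:ℝ) < K + 1).ne'
      _ < ε := by linarith
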